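/- Let n ≥ 2 and let 𝓛 be the map 𝓛(ρ) = Σ_{β ∈ {0,1}^{n−1}} M_β ρ M_β† with M_β = ( I_{A_1} ⊗ ⟨β|_{A_2…A_n} ⊗ X^{β_1}_{B_2} ⊗ … ⊗ X^{β_{n−1}}_{B_n} ) ( CNOT_n on A_1…A_n ⊗ I_{B_1…B_n} ). Then for EVERY operator ρ on the 2n-qubit space (in particular for arbitrarily correlated input states), ⟨GHZ_{n+1}| 𝓛(ρ) |GHZ_{n+1}⟩ = Σ_{z ∈ {0,1}^{n−1}} ⟨b_z| ρ |b_z⟩, where |b_z⟩ = |Φ^{z',0}⟩_{A_1B_1} ⊗ ⊗_{i=1}^{n−1} |Φ^{z_i,0}⟩_{A_{i+1}B_{i+1}} and z' = z_1 ⊕ … ⊕ z_{n−1}. -/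

import Mathlib

open Matrix

/-- Basis labels for registers `A_1, …, A_n, B_1, …, B_n` (`n = n' + 2`). -/
abbrev PairBasis (n : ℕ) : Type := (Fin n → Fin 2) × (Fin n → Fin 2)

/-- Basis labels for the output registers `A_1, B_1, …, B_n`. -/
abbrev OutBasis (n : ℕ) : Type := Fin 2 × (Fin n → Fin 2)

/-- Amplitude of `|GHZ_{n+1}⟩` on registers `A_1, B_1, …, B_n`. -/
noncomputable def ghzA1B (n : ℕ) : OutBasis (n + 2) → ℂ := fun u =>
  ((if u.1 = 0 ∧ u.2 = fun _ => 0 then 1 else 0) +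
      (if u.1 = 1 ∧ u.2 = fun _ => 1 then 1 else 0)) / (Real.sqrt 2 : ℂ)

/-- Amplitude of the Bell basis state `|Φ^{z,x}⟩ = (Z^z X^x ⊗ I)|Φ⟩` at `(u, v)`. -/
noncomputable def bellBasisAmp (z x : Fin 2) (u v : Fin 2) : ℂ :=
  if u = v + x then (-1) ^ (z.val * u.val) * ((Real.sqrt 2 : ℂ))⁻¹ else 0

/-- `CNOT_n ⊗ I_B`: `|0⟩⟨0| ⊗ I^{⊗(n-1)} + |1⟩⟨1| ⊗ X^{⊗(n-1)}` on the `A`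
registers (control `A_1`), identity on the `B` registers. -/
noncomputable def cnotA (n : ℕ) : Matrix (PairBasis (n + 2)) (PairBasis (n + 2)) ℂ :=
  Matrix.of fun p q =>
    if p.2 = q.2 ∧ p.1 0 = q.1 0 ∧ (∀ i, i ≠ 0 → p.1 i = q.1 i + q.1 0)
    then (1 : ℂ) else 0

/-- The correction operator `⊗_{i=1}^{n-1} X^{β_i}_{B_{i+1}}`. -/
noncomputable def xCorrB (n : ℕ) (β : Fin (n + 1) → Fin 2) :
    Matrix (PairBasis (n + 2)) (PairBasis (n + 2)) ℂ :=
  Matrix.of fun p q =>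
    if p.1 = q.1 ∧ (∀ j, p.2 j = q.2 j + (Fin.cons 0 β : Fin (n + 2) → Fin 2) j)
    then (1 : ℂ) else 0

/-- The Kraus operator
`M_β = (I_{A_1} ⊗ ⟨β|_{A_2 ⋯ A_n} ⊗ X^{β_1}_{B_2} ⊗ ⋯ ⊗ X^{β_{n-1}}_{B_n})(CNOT_n ⊗ I_B)`. -/
noncomputable def krausM (n : ℕ) (β : Fin (n + 1) → Fin 2) :
    Matrix (OutBasis (n + 2)) (PairBasis (n + 2)) ℂ :=
  Matrix.of fun o p => (xCorrB n β * cnotA n) ((Fin.cons o.1 β, o.2)) p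

/-- The Bell-basis product vector
`|b_z⟩ = |Φ^{z',0}⟩_{A_1 B_1} ⊗ ⊗_{i=1}^{n-1} |Φ^{z_i,0}⟩_{A_{i+1} B_{i+1}}`,
with `z' = z₁ ⊕ ⋯ ⊕ z_{n-1}`. -/
noncomputable def bVec (n : ℕ) (z : Fin (n + 1) → Fin 2) : PairBasis (n + 2) → ℂ :=
  fun p =>
    bellBasisAmp (∑ i, z i) 0 (p.1 0) (p.2 0) *
      ∏ i : Fin (n + 1), bellBasisAmp (z i) 0 (p.1 i.succ) (p.2 i.succ)

namespace Protocol2Aux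

noncomputable def sq2 : ℂ := ((Real.sqrt 2 : ℝ) : ℂ)

lemma sq2_mul_self : (sq2)⁻¹ * (sq2)⁻¹ = (1/2 : ℂ) := by
  rw [← mul_inv]
  have h : sq2 * sq2 = 2 := by
    unfold sq2
    rw [← Complex.ofReal_mul, Real.mul_self_sqrt (by norm_num)]
    norm_num
  rw [h]; norm_num

lemma star_sq2 : star sq2 = sq2 := by
  simp [sq2, Complex.star_def, Complex.conj_ofReal]

lemma star_sq2_inv : star ((sq2)⁻¹) = (sq2)⁻¹ := by
  simp [sq2, Complex.star_def, Complex.conj_ofReal]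

noncomputable def sgn (a u : Fin 2) : ℂ := (-1) ^ (a.val * u.val)

lemma sgn_zero (u : Fin 2) : sgn 0 u = 1 := by simp [sgn]

lemma sgn_add (a b u : Fin 2) : sgn (a + b) u = sgn a u * sgn b u := by
  fin_cases a <;> fin_cases b <;> fin_cases u <;>
    norm_num [sgn, show ((2 : Fin 2)).val = 0 from rfl, show ((1 + 1 : Fin 2)).val = 0 from rfl]

lemma sgn_mul (a u v : Fin 2) : sgn a u * sgn a v = sgn a (u + v) := by
  fin_cases a <;> fin_cases u <;> fin_cases v <;>
    norm_num [sgn, show ((2 : Fin 2)).val = 0 from rfl, show ((1 + 1 : Fin 2)).val = 0 from rfl]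

lemma sgn_sum {ι : Type*} (t : Finset ι) (z : ι → Fin 2) (u : Fin 2) :
    sgn (∑ i ∈ t, z i) u = ∏ i ∈ t, sgn (z i) u := by
  induction t using Finset.cons_induction with
  | empty => simp [sgn_zero]
  | cons a s ha ih => rw [Finset.sum_cons, Finset.prod_cons, sgn_add, ih]

lemma sum_sgn (c : Fin 2) : ∑ x : Fin 2, sgn x c = if c = 0 then 2 else 0 := by
  rw [Fin.sum_univ_two]
  fin_cases c <;> norm_num [sgn]

def betaOf {n : ℕ} (p : PairBasis (n + 2)) : Fin (n + 1) → Fin 2 :=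
  fun i => p.1 i.succ + p.1 0

lemma krausM_apply (n : ℕ) (β : Fin (n + 1) → Fin 2) (o : OutBasis (n + 2))
    (p : PairBasis (n + 2)) :
    krausM n β o p =
      if (∀ j, o.2 j = p.2 j + (Fin.cons 0 β : Fin (n + 2) → Fin 2) j) ∧
          o.1 = p.1 0 ∧ (∀ i : Fin (n + 1), β i = p.1 i.succ + p.1 0)
      then 1 else 0 := by
  have fin2_swap : ∀ a b c : Fin 2, a = b + c ↔ b = a + c := by decide
  have fin2_swap' : ∀ a b c : Fin 2, a + c = b ↔ a = b + c := by decide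
  unfold krausM
  rw [Matrix.of_apply, Matrix.mul_apply]
  have hx : ∀ s : PairBasis (n + 2),
      xCorrB n β (Fin.cons o.1 β, o.2) s =
        if s = (Fin.cons o.1 β, fun j => o.2 j + (Fin.cons 0 β : Fin (n + 2) → Fin 2) j)
        then 1 else 0 := by
    intro s
    unfold xCorrB
    rw [Matrix.of_apply]
    refine if_congr ?_ rfl rfl
    rw [Prod.ext_iff]
    constructor
    · rintro ⟨h1, h2⟩
      exact ⟨h1.symm, funext fun j => (fin2_swap _ _ _).mp (h2 j)⟩
    · rintro ⟨h1, h2⟩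
      exact ⟨h1.symm, fun j => (fin2_swap _ _ _).mpr (congrFun h2 j)⟩
  simp only [hx, ite_mul, one_mul, zero_mul, Finset.sum_ite_eq' Finset.univ,
    Finset.mem_univ, if_true]
  unfold cnotA
  rw [Matrix.of_apply]
  refine if_congr ?_ rfl rfl
  constructor
  · rintro ⟨h1, h2, h3⟩
    refine ⟨fun j => (fin2_swap' _ _ _).mp (congrFun h1 j), ?_, ?_⟩
    · simpa [Fin.cons_zero] using h2
    · intro i
      have := h3 i.succ (Fin.succ_ne_zero i)
      simpa [Fin.cons_succ] using this
  · rintro ⟨h1, h2, h3⟩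
    refine ⟨funext fun j => (fin2_swap' _ _ _).mpr (h1 j), ?_, ?_⟩
    · simpa [Fin.cons_zero] using h2
    · intro i hi
      induction i using Fin.cases with
      | zero => exact absurd rfl hi
      | succ k => simpa [Fin.cons_succ] using h3 k

lemma ghz_apply (n : ℕ) (o : OutBasis (n + 2)) :
    ghzA1B n o = ((if o = ((0 : Fin 2), fun _ => (0 : Fin 2)) then 1 else 0) +
      (if o = ((1 : Fin 2), fun _ => (1 : Fin 2)) then 1 else 0)) / sq2 := by
  unfold ghzA1B sq2
  congr 1
  congr 1 <;> refine if_congr ?_ rfl rfl <;> rw [Prod.ext_iff]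

lemma cond_iff (n : ℕ) (β : Fin (n + 1) → Fin 2) (p : PairBasis (n + 2)) (a : Fin 2) :
    ((∀ j, ((a, fun _ => a) : OutBasis (n + 2)).2 j =
          p.2 j + (Fin.cons 0 β : Fin (n + 2) → Fin 2) j) ∧
        ((a, fun _ => a) : OutBasis (n + 2)).1 = p.1 0 ∧
        (∀ i : Fin (n + 1), β i = p.1 i.succ + p.1 0)) ↔
      ((p.1 = p.2 ∧ betaOf p = β) ∧ p.1 0 = a) := by
  show ((∀ j, a = p.2 j + (Fin.cons 0 β : Fin (n + 2) → Fin 2) j) ∧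
      a = p.1 0 ∧ (∀ i : Fin (n + 1), β i = p.1 i.succ + p.1 0)) ↔ _
  have f1 : ∀ a x y : Fin 2, a = y + (x + a) → x = y := by decide
  have f2 : ∀ a : Fin 2, a = a + 0 := by decide
  have f3 : ∀ a x : Fin 2, a = x + (x + a) := by decide
  constructor
  · rintro ⟨h1, h2, h3⟩
    refine ⟨⟨funext fun j => ?_, funext fun i => (h3 i).symm⟩, h2.symm⟩
    induction j using Fin.cases with
    | zero =>
      have := h1 0
      rw [Fin.cons_zero] at this
      rw [← h2, this, ← f2]
    | succ k =>
      have hk := h1 k.succ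
      rw [Fin.cons_succ, h3 k, ← h2] at hk
      exact f1 _ _ _ hk
  · rintro ⟨⟨hd, hb⟩, h0⟩
    refine ⟨fun j => ?_, h0.symm, fun i => (congrFun hb i).symm⟩
    induction j using Fin.cases with
    | zero =>
      rw [Fin.cons_zero, ← hd, h0]
      exact f2 a
    | succ k =>
      rw [Fin.cons_succ, ← congrFun hb k]
      show a = p.2 k.succ + (p.1 k.succ + p.1 0)
      rw [← hd, h0]
      exact f3 a _

lemma kraus_vec (n : ℕ) (β : Fin (n + 1) → Fin 2) :
    (krausM n β)ᴴ.mulVec (ghzA1B n) =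
      fun p => if p.1 = p.2 ∧ betaOf p = β then (sq2)⁻¹ else 0 := by
  have h01 : ∀ a : Fin 2, a = 0 ∨ a = 1 := by decide
  funext p
  show ∑ o, (krausM n β)ᴴ p o * ghzA1B n o = _
  simp only [Matrix.conjTranspose_apply, krausM_apply, ghz_apply, div_eq_mul_inv, ← mul_assoc]
  rw [← Finset.sum_mul]
  have collapse : ∀ o₀ : OutBasis (n + 2), (∑ o : OutBasis (n + 2),
      star (if (∀ j, o.2 j = p.2 j + (Fin.cons 0 β : Fin (n + 2) → Fin 2) j) ∧
          o.1 = p.1 0 ∧ (∀ i : Fin (n + 1), β i = p.1 i.succ + p.1 0) then (1:ℂ) else 0) *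
        (if o = o₀ then 1 else 0))
      = (if (∀ j, o₀.2 j = p.2 j + (Fin.cons 0 β : Fin (n + 2) → Fin 2) j) ∧
          o₀.1 = p.1 0 ∧ (∀ i : Fin (n + 1), β i = p.1 i.succ + p.1 0) then (1:ℂ) else 0) := by
    intro o₀
    rw [Finset.sum_eq_single o₀]
    · simp [apply_ite (star : ℂ → ℂ)]
    · intro o _ ho; simp [ho]
    · simp
  have hsum : (∑ o : OutBasis (n + 2),
      star (if (∀ j, o.2 j = p.2 j + (Fin.cons 0 β : Fin (n + 2) → Fin 2) j) ∧
          o.1 = p.1 0 ∧ (∀ i : Fin (n + 1), β i = p.1 i.succ + p.1 0) then (1:ℂ) else 0) *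
        ((if o = ((0 : Fin 2), fun _ => (0 : Fin 2)) then 1 else 0) +
          (if o = ((1 : Fin 2), fun _ => (1 : Fin 2)) then 1 else 0)))
      = (if p.1 = p.2 ∧ betaOf p = β then (1:ℂ) else 0) := by
    simp only [mul_add]
    rw [Finset.sum_add_distrib, collapse ((0 : Fin 2), fun _ => (0 : Fin 2)),
      collapse ((1 : Fin 2), fun _ => (1 : Fin 2)),
      if_congr (cond_iff n β p 0) rfl rfl, if_congr (cond_iff n β p 1) rfl rfl]
    rcases h01 (p.1 0) with h | h <;>
      simp [h, show ((0:Fin 2) ≠ 1) from by decide, show ((1:Fin 2) ≠ 0) from by decide]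
  rw [hsum, ite_mul, one_mul, zero_mul]

lemma kernelL (n : ℕ) (p q : PairBasis (n + 2)) :
    (∑ β : Fin (n + 1) → Fin 2,
        star (if p.1 = p.2 ∧ betaOf p = β then (sq2)⁻¹ else (0:ℂ)) *
          (if q.1 = q.2 ∧ betaOf q = β then (sq2)⁻¹ else 0))
      = if p.1 = p.2 ∧ q.1 = q.2 ∧ betaOf p = betaOf q then (1/2 : ℂ) else 0 := by
  by_cases hp : p.1 = p.2
  · by_cases hq : q.1 = q.2
    · simp only [hp, hq, true_and]
      have : ∀ β : Fin (n + 1) → Fin 2,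
          star (if betaOf p = β then (sq2)⁻¹ else (0:ℂ)) *
            (if betaOf q = β then (sq2)⁻¹ else 0)
          = if betaOf p = β then (if betaOf q = β then (sq2)⁻¹ * (sq2)⁻¹ else 0) else 0 := by
        intro β
        rcases eq_or_ne (betaOf p) β with h | h <;> rcases eq_or_ne (betaOf q) β with h' | h' <;>
          simp [h, h', star_sq2_inv, star_sq2]
      rw [Finset.sum_congr rfl fun β _ => this β]
      rw [Finset.sum_ite_eq Finset.univ (betaOf p)
        (fun β => if betaOf q = β then (sq2)⁻¹ * (sq2)⁻¹ else 0)]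
      simp only [Finset.mem_univ, if_true, sq2_mul_self]
      rcases eq_or_ne (betaOf p) (betaOf q) with h | h
      · simp [h]
      · rw [if_neg h, if_neg (fun hh => h hh.symm)]
    · simp [hq]
  · simp [hp]

lemma bell_diag (z u v : Fin 2) (h : u = v) :
    bellBasisAmp z 0 u v = sgn z u * (sq2)⁻¹ := by
  subst h
  unfold bellBasisAmp sgn sq2
  rw [if_pos (by rw [add_zero])]

lemma bell_ne (z : Fin 2) {u v : Fin 2} (h : u ≠ v) : bellBasisAmp z 0 u v = 0 := by
  unfold bellBasisAmp
  rw [if_neg (by rwa [add_zero])]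

lemma bell_real (z x u v : Fin 2) : star (bellBasisAmp z x u v) = bellBasisAmp z x u v := by
  unfold bellBasisAmp
  rcases eq_or_ne u (v + x) with h | h <;>
    simp [h, Complex.star_def, Complex.conj_ofReal]

lemma bVec_real (n : ℕ) (z : Fin (n + 1) → Fin 2) (p : PairBasis (n + 2)) :
    star (bVec n z p) = bVec n z p := by
  unfold bVec
  rw [star_mul', star_prod]
  simp only [bell_real]

lemma bVec_zero (n : ℕ) (z : Fin (n + 1) → Fin 2) (p : PairBasis (n + 2))
    (hp : p.1 ≠ p.2) : bVec n z p = 0 := by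
  have : ∃ j, p.1 j ≠ p.2 j := by
    by_contra h
    push_neg at h
    exact hp (funext h)
  obtain ⟨j, hj⟩ := this
  unfold bVec
  induction j using Fin.cases with
  | zero => rw [bell_ne _ hj, zero_mul]
  | succ k =>
    rw [Finset.prod_eq_zero (Finset.mem_univ k) (bell_ne _ hj), mul_zero]

lemma kernelR (n : ℕ) (p q : PairBasis (n + 2)) :
    (∑ z : Fin (n + 1) → Fin 2, star (bVec n z p) * bVec n z q)
      = if p.1 = p.2 ∧ q.1 = q.2 ∧ betaOf p = betaOf q then (1/2 : ℂ) else 0 := by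
  by_cases hp : p.1 = p.2
  · by_cases hq : q.1 = q.2
    · simp only [bVec_real, hp, hq, true_and]
      have hbp : ∀ (r : PairBasis (n + 2)) (_ : r.1 = r.2) (z : Fin (n + 1) → Fin 2),
          bVec n z r = (sgn (∑ i, z i) (r.1 0) * (sq2)⁻¹) *
            ∏ i : Fin (n + 1), (sgn (z i) (r.1 i.succ) * (sq2)⁻¹) := by
        intro r hr z
        unfold bVec
        rw [bell_diag _ _ _ (congrFun hr 0)]
        congr 1
        exact Finset.prod_congr rfl fun i _ => bell_diag _ _ _ (congrFun hr i.succ)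
      have merge4 : ∀ (A B C D : Fin (n + 1) → ℂ) (s : ℂ),
          ((∏ i : Fin (n + 1), A i) * s * (∏ i : Fin (n + 1), B i)) *
            ((∏ i : Fin (n + 1), C i) * s * (∏ i : Fin (n + 1), D i))
          = (s * s) * ∏ i : Fin (n + 1), (A i * C i * (B i * D i)) := by
        intro A B C D s
        have h1 : ((∏ i : Fin (n + 1), A i) * s * (∏ i : Fin (n + 1), B i)) *
            ((∏ i : Fin (n + 1), C i) * s * (∏ i : Fin (n + 1), D i))
            = (s * s) * (((∏ i : Fin (n + 1), A i) * (∏ i : Fin (n + 1), C i)) *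
              ((∏ i : Fin (n + 1), B i) * (∏ i : Fin (n + 1), D i))) := by ring
        rw [h1, ← Finset.prod_mul_distrib, ← Finset.prod_mul_distrib,
          ← Finset.prod_mul_distrib]
      have point : ∀ (a u v x y : Fin 2),
          sgn a u * sgn a v * (sgn a x * (sq2)⁻¹ * (sgn a y * (sq2)⁻¹))
          = (1/2 : ℂ) * sgn a (u + v + (x + y)) := by
        intro a u v x y
        have h1 : sgn a u * sgn a v * (sgn a x * (sq2)⁻¹ * (sgn a y * (sq2)⁻¹))
            = ((sq2)⁻¹ * (sq2)⁻¹) * ((sgn a u * sgn a v) * (sgn a x * sgn a y)) := by ring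
        rw [h1, sq2_mul_self, sgn_mul, sgn_mul, sgn_mul]
      have key : ∀ z : Fin (n + 1) → Fin 2,
          bVec n z p * bVec n z q = (1/2 : ℂ) *
            ∏ i : Fin (n + 1), ((1/2 : ℂ) *
              sgn (z i) (p.1 0 + q.1 0 + (p.1 i.succ + q.1 i.succ))) := by
        intro z
        rw [hbp p hp z, hbp q hq z, sgn_sum Finset.univ z (p.1 0),
          sgn_sum Finset.univ z (q.1 0), merge4, sq2_mul_self]
        congr 1
        exact Finset.prod_congr rfl fun i _ =>
          point (z i) (p.1 0) (q.1 0) (p.1 i.succ) (q.1 i.succ)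
      rw [Finset.sum_congr rfl fun z _ => key z, ← Finset.mul_sum]
      rw [show (Finset.univ : Finset (Fin (n + 1) → Fin 2))
          = Fintype.piFinset (fun _ => (Finset.univ : Finset (Fin 2))) from
          (Fintype.piFinset_univ).symm]
      have fub := Finset.sum_prod_piFinset (Finset.univ : Finset (Fin 2))
        (fun (i : Fin (n + 1)) (x : Fin 2) =>
          ((1:ℂ)/2) * sgn x (p.1 0 + q.1 0 + (p.1 i.succ + q.1 i.succ)))
      simp only [fub]
      have per : ∀ i : Fin (n + 1),
          (∑ x ∈ (Finset.univ : Finset (Fin 2)), (1/2 : ℂ) *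
            sgn x (p.1 0 + q.1 0 + (p.1 i.succ + q.1 i.succ)))
          = if p.1 0 + q.1 0 + (p.1 i.succ + q.1 i.succ) = 0 then (1:ℂ) else 0 := by
        intro i
        rw [← Finset.mul_sum, sum_sgn]
        rcases eq_or_ne (p.1 0 + q.1 0 + (p.1 i.succ + q.1 i.succ)) 0 with h | h <;>
          simp [h]
      rw [Finset.prod_congr rfl fun i _ => per i, Fintype.prod_boole]
      have hcond : (∀ i : Fin (n + 1), p.1 0 + q.1 0 + (p.1 i.succ + q.1 i.succ) = 0)
          ↔ betaOf p = betaOf q := by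
        rw [funext_iff]
        have f4 : ∀ a b x y : Fin 2, (a + b + (x + y) = 0 ↔ x + a = y + b) := by decide
        exact forall_congr' fun i => f4 (p.1 0) (q.1 0) (p.1 i.succ) (q.1 i.succ)
      simp only [hcond]
      rcases eq_or_ne (betaOf p) (betaOf q) with h | h <;> simp [h]
    · simp [fun z => bVec_zero n z q hq, hq]
  · simp [fun z => bVec_zero n z p hp, hp]

lemma expand {ι : Type*} [Fintype ι] (n : ℕ)
    (ρ : Matrix (PairBasis (n + 2)) (PairBasis (n + 2)) ℂ)
    (v : ι → PairBasis (n + 2) → ℂ) :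
    (∑ t : ι, star (v t) ⬝ᵥ ρ.mulVec (v t))
      = ∑ p : PairBasis (n + 2), ∑ q : PairBasis (n + 2),
          ρ p q * (∑ t : ι, star (v t p) * v t q) := by
  simp only [dotProduct, Matrix.mulVec, Pi.star_apply, Finset.mul_sum]
  rw [Finset.sum_comm]
  refine Finset.sum_congr rfl fun p _ => ?_
  rw [Finset.sum_comm]
  refine Finset.sum_congr rfl fun q _ => ?_
  exact Finset.sum_congr rfl fun t _ => by ring

lemma sum_mulVec' {ι α β' : Type*} [Fintype ι] [Fintype β'] [DecidableEq α]
    (A : ι → Matrix α β' ℂ) (w : β' → ℂ) :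
    (∑ t : ι, A t).mulVec w = ∑ t : ι, (A t).mulVec w := by
  funext o
  simp only [Matrix.mulVec, dotProduct, Finset.sum_apply, Matrix.sum_apply,
    Finset.sum_mul]
  exact Finset.sum_comm

lemma dotProduct_sum' {ι α : Type*} [Fintype ι] [Fintype α] (w : α → ℂ) (x : ι → α → ℂ) :
    w ⬝ᵥ (∑ t : ι, x t) = ∑ t : ι, w ⬝ᵥ x t := by
  simp only [dotProduct, Finset.sum_apply, Finset.mul_sum]
  exact Finset.sum_comm

lemma step_beta (n : ℕ) (ρ : Matrix (PairBasis (n + 2)) (PairBasis (n + 2)) ℂ)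
    (β : Fin (n + 1) → Fin 2) :
    star (ghzA1B n) ⬝ᵥ (krausM n β * ρ * (krausM n β)ᴴ).mulVec (ghzA1B n)
      = star ((krausM n β)ᴴ.mulVec (ghzA1B n)) ⬝ᵥ
          ρ.mulVec ((krausM n β)ᴴ.mulVec (ghzA1B n)) := by
  rw [← Matrix.mulVec_mulVec, ← Matrix.mulVec_mulVec, Matrix.dotProduct_mulVec]
  congr 1
  rw [Matrix.star_mulVec, Matrix.conjTranspose_conjTranspose]

end Protocol2Aux

/-- **Fidelity formula for Protocol 2 with arbitrarily correlated inputs.**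
For every operator `ρ` on the `2n`-qubit space (`n = n' + 2`),
`⟨GHZ_{n+1}| ∑_β M_β ρ M_β† |GHZ_{n+1}⟩ = ∑_{z ∈ {0,1}^{n-1}} ⟨b_z| ρ |b_z⟩`. -/
theorem fidelity_protocol2_general (n : ℕ)
    (ρ : Matrix (PairBasis (n + 2)) (PairBasis (n + 2)) ℂ) :
    star (ghzA1B n) ⬝ᵥ
        (∑ β : Fin (n + 1) → Fin 2, krausM n β * ρ * (krausM n β)ᴴ).mulVec (ghzA1B n)
      = ∑ z : Fin (n + 1) → Fin 2, star (bVec n z) ⬝ᵥ ρ.mulVec (bVec n z) := by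
  open Protocol2Aux in
  calc star (ghzA1B n) ⬝ᵥ
        (∑ β : Fin (n + 1) → Fin 2, krausM n β * ρ * (krausM n β)ᴴ).mulVec (ghzA1B n)
      = ∑ β : Fin (n + 1) → Fin 2,
          star (fun p : PairBasis (n + 2) =>
              if p.1 = p.2 ∧ Protocol2Aux.betaOf p = β then (Protocol2Aux.sq2)⁻¹ else 0) ⬝ᵥ
            ρ.mulVec (fun p : PairBasis (n + 2) =>
              if p.1 = p.2 ∧ Protocol2Aux.betaOf p = β then (Protocol2Aux.sq2)⁻¹ else 0) := by
        rw [Protocol2Aux.sum_mulVec', Protocol2Aux.dotProduct_sum']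
        exact Finset.sum_congr rfl fun β _ => by
          rw [Protocol2Aux.step_beta n ρ β, Protocol2Aux.kraus_vec n β]
    _ = ∑ p : PairBasis (n + 2), ∑ q : PairBasis (n + 2),
          ρ p q * (∑ β : Fin (n + 1) → Fin 2,
            star (if p.1 = p.2 ∧ Protocol2Aux.betaOf p = β then (Protocol2Aux.sq2)⁻¹ else (0:ℂ)) *
              (if q.1 = q.2 ∧ Protocol2Aux.betaOf q = β then (Protocol2Aux.sq2)⁻¹ else 0)) :=
        Protocol2Aux.expand n ρ _
    _ = ∑ p : PairBasis (n + 2), ∑ q : PairBasis (n + 2),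
          ρ p q * (∑ z : Fin (n + 1) → Fin 2, star (bVec n z p) * bVec n z q) := by
        refine Finset.sum_congr rfl fun p _ => Finset.sum_congr rfl fun q _ => ?_
        rw [Protocol2Aux.kernelL, Protocol2Aux.kernelR]
    _ = ∑ z : Fin (n + 1) → Fin 2, star (bVec n z) ⬝ᵥ ρ.mulVec (bVec n z) :=
        (Protocol2Aux.expand n ρ _).symm
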